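/- Let k ≥ 0 be an integer and let σ be a facet (maximal simplex) of the Vietoris–Rips complex VR(ℤ²;k), where ℤ² carries the ℓ¹ metric. Then there exists a point c ∈ ℝ², each of whose two coordinates is an integer or a half-integer, such that σ = B_{ℝ²}[c, k/2] ∩ ℤ². -/

import Mathlib

/-- The ℓ¹ metric on `ℤ × ℤ`. -/
def dZ2 (x y : ℤ × ℤ) : ℤ := |x.1 - y.1| + |x.2 - y.2|

/-- `σ` is a simplex of the Vietoris–Rips complex `VR(V; k)` of the metric space `V`
with (integer-valued) distance `d`: a finite nonempty subset of diameter at most `k`. -/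
def IsVRSimplex {V : Type*} (d : V → V → ℤ) (k : ℤ) (σ : Finset V) : Prop :=
  σ.Nonempty ∧ ∀ x ∈ σ, ∀ y ∈ σ, d x y ≤ k

/-- `σ` is a facet (maximal simplex) of the Vietoris–Rips complex `VR(V; k)`. -/
def IsVRFacet {V : Type*} (d : V → V → ℤ) (k : ℤ) (σ : Finset V) : Prop :=
  IsVRSimplex d k σ ∧ ∀ τ : Finset V, IsVRSimplex d k τ → σ ⊆ τ → σ = τ

/-- If `|s+t| ≤ r` and `|s-t| ≤ r` then `|s|+|t| ≤ r` (integers). -/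
lemma ikey (s t r : ℤ) (h1 : |s + t| ≤ r) (h2 : |s - t| ≤ r) : |s| + |t| ≤ r := by
  rw [abs_le] at h1 h2
  rcases abs_cases s with ⟨h, _⟩ | ⟨h, _⟩ <;> rcases abs_cases t with ⟨h', _⟩ | ⟨h', _⟩ <;>
    rw [h, h'] <;> omega

/-- If `|s+t| ≤ r` and `|s-t| ≤ r` then `|s|+|t| ≤ r` (reals). -/
lemma rkey (s t r : ℝ) (h1 : |s + t| ≤ r) (h2 : |s - t| ≤ r) : |s| + |t| ≤ r := by
  rw [abs_le] at h1 h2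
  rcases abs_cases s with ⟨h, _⟩ | ⟨h, _⟩ <;> rcases abs_cases t with ⟨h', _⟩ | ⟨h', _⟩ <;>
    rw [h, h'] <;> linarith

lemma myabs_sub {α : Type*} [AddCommGroup α] [LinearOrder α] [IsOrderedAddMonoid α] (a b : α) :
    |a - b| ≤ |a| + |b| := by
  rw [sub_eq_add_neg]
  exact (abs_add_le _ _).trans (by rw [abs_neg])

lemma dZ2_self (p : ℤ × ℤ) : dZ2 p p = 0 := by simp [dZ2]

lemma dZ2_comm (p q : ℤ × ℤ) : dZ2 p q = dZ2 q p := by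
  simp [dZ2, abs_sub_comm]

/-- In a facet, any point at distance ≤ k from all points of σ is in σ. -/
lemma facet_insert {k : ℤ} (hk : 0 ≤ k) {σ : Finset (ℤ × ℤ)} (hσ : IsVRFacet dZ2 k σ)
    (p : ℤ × ℤ) (h : ∀ x ∈ σ, dZ2 p x ≤ k) : p ∈ σ := by
  have hτ : IsVRSimplex dZ2 k (insert p σ) := by
    refine ⟨Finset.insert_nonempty _ _, ?_⟩
    intro x hx y hy
    rcases Finset.mem_insert.mp hx with hx1 | hx1 <;> rcases Finset.mem_insert.mp hy with hy1 | hy1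
    · rw [hx1, hy1, dZ2_self]; exact hk
    · rw [hx1]; exact h y hy1
    · rw [hy1, dZ2_comm]; exact h x hx1
    · exact hσ.1.2 x hx1 y hy1
  have heq := hσ.2 _ hτ (Finset.subset_insert _ _)
  rw [heq]
  exact Finset.mem_insert_self p σ

/-- Key structural lemma: in a facet, the spread in a "rotated" coordinate equals exactly k. -/
lemma spread_eq (k : ℤ) (hk : 0 ≤ k) (σ : Finset (ℤ × ℤ)) (hσ : IsVRFacet dZ2 k σ)
    (f g : ℤ × ℤ → ℤ)
    (hd : ∀ x y, dZ2 x y ≤ k ↔ |f x - f y| ≤ k ∧ |g x - g y| ≤ k)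
    (hex : ∀ α β : ℤ, (α + β) % 2 = 0 → ∃ p : ℤ × ℤ, f p = α ∧ g p = β)
    (a A b B : ℤ)
    (pa pA pb pB : ℤ × ℤ) (hpa : pa ∈ σ) (hpA : pA ∈ σ) (hpb : pb ∈ σ) (hpB : pB ∈ σ)
    (hfa : f pa = a) (hfA : f pA = A) (hgb : g pb = b) (hgB : g pB = B)
    (hmin : ∀ x ∈ σ, a ≤ f x) (hmax : ∀ x ∈ σ, f x ≤ A)
    (hminb : ∀ x ∈ σ, b ≤ g x) (hmaxb : ∀ x ∈ σ, g x ≤ B) :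
    A = a + k := by
  by_contra hne
  have h1 : A - a ≤ k := by
    have h := ((hd pA pa).mp (hσ.1.2 pA hpA pa hpa)).1
    rw [hfA, hfa, abs_le] at h
    omega
  have h0 : a ≤ A := hfA ▸ hmin pA hpA
  have hBb : B - b ≤ k := by
    have h := ((hd pB pb).mp (hσ.1.2 pB hpB pb hpb)).2
    rw [hgB, hgb, abs_le] at h
    omega
  have h0b : b ≤ B := hgB ▸ hminb pB hpB
  have hk1 : 1 ≤ k := by omega
  obtain ⟨p, hfp, hgp⟩ := hex (A + 1) (b + (A + 1 - b) % 2) (by omega)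
  have hmem : p ∈ σ := by
    apply facet_insert hk hσ
    intro x hx
    refine (hd p x).mpr ⟨?_, ?_⟩
    · have h2 := hmin x hx; have h3 := hmax x hx
      rw [hfp, abs_le]; omega
    · have h2 := hminb x hx; have h3 := hmaxb x hx
      rw [hgp, abs_le]; omega
  have := hmax p hmem
  omega

theorem stmt0 (k : ℤ) (hk : 0 ≤ k) (σ : Finset (ℤ × ℤ)) (hσ : IsVRFacet dZ2 k σ) :
    ∃ c : ℝ × ℝ,
      (∃ m : ℤ, c.1 = m ∨ c.1 = m + 1 / 2) ∧
      (∃ m : ℤ, c.2 = m ∨ c.2 = m + 1 / 2) ∧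
      (↑σ : Set (ℤ × ℤ)) =
        {p : ℤ × ℤ | |c.1 - (p.1 : ℝ)| + |c.2 - (p.2 : ℝ)| ≤ (k : ℝ) / 2} := by
  classical
  have hne : σ.Nonempty := hσ.1.1
  set u : ℤ × ℤ → ℤ := fun p => p.1 + p.2 with hu
  set v : ℤ × ℤ → ℤ := fun p => p.1 - p.2 with hv
  have hd : ∀ x y : ℤ × ℤ, dZ2 x y ≤ k ↔ |u x - u y| ≤ k ∧ |v x - v y| ≤ k := by
    intro x y
    constructor
    · intro h
      constructor
      · have e1 : u x - u y = (x.1 - y.1) + (x.2 - y.2) := by simp [hu]; ring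
        rw [e1]
        exact (abs_add_le _ _).trans h
      · have e2 : v x - v y = (x.1 - y.1) - (x.2 - y.2) := by simp [hv]; ring
        rw [e2]
        exact (myabs_sub _ _).trans h
    · rintro ⟨h1, h2⟩
      have e1 : u x - u y = (x.1 - y.1) + (x.2 - y.2) := by simp [hu]; ring
      have e2 : v x - v y = (x.1 - y.1) - (x.2 - y.2) := by simp [hv]; ring
      rw [e1] at h1; rw [e2] at h2
      exact ikey _ _ _ h1 h2
  have hex_uv : ∀ α β : ℤ, (α + β) % 2 = 0 → ∃ p : ℤ × ℤ, u p = α ∧ v p = β := by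
    intro α β hpar
    refine ⟨⟨(α + β) / 2, (α - β) / 2⟩, ?_, ?_⟩ <;> simp [hu, hv] <;> omega
  have hex_vu : ∀ α β : ℤ, (α + β) % 2 = 0 → ∃ p : ℤ × ℤ, v p = α ∧ u p = β := by
    intro α β hpar
    refine ⟨⟨(β + α) / 2, (β - α) / 2⟩, ?_, ?_⟩ <;> simp [hu, hv] <;> omega
  obtain ⟨pa, hpa, hmin⟩ := σ.exists_min_image u hne
  obtain ⟨pA, hpA, hmax⟩ := σ.exists_max_image u hne
  obtain ⟨pb, hpb, hminb⟩ := σ.exists_min_image v hne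
  obtain ⟨pB, hpB, hmaxb⟩ := σ.exists_max_image v hne
  set a := u pa with ha
  set A := u pA with hA
  set b := v pb with hb
  set B := v pB with hB
  have hAa : A = a + k :=
    spread_eq k hk σ hσ u v hd hex_uv a A b B pa pA pb pB hpa hpA hpb hpB rfl rfl rfl rfl
      hmin hmax hminb hmaxb
  have hBb : B = b + k := by
    have hd' : ∀ x y, dZ2 x y ≤ k ↔ |v x - v y| ≤ k ∧ |u x - u y| ≤ k := by
      intro x y; rw [hd x y]; exact and_comm
    exact spread_eq k hk σ hσ v u hd' hex_vu b B a A pb pB pa pA hpb hpB hpa hpA rfl rfl rfl rfl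
      hminb hmaxb hmin hmax
  refine ⟨(((a : ℝ) + b + k) / 2, ((a : ℝ) - b) / 2), ?_, ?_, ?_⟩
  · rcases Int.even_or_odd (a + b + k) with ⟨j, hj⟩ | ⟨j, hj⟩
    · exact ⟨j, Or.inl (by have : (a : ℝ) + b + k = (j : ℝ) + j := by exact_mod_cast hj
                           simp only []; rw [this]; ring)⟩
    · exact ⟨j, Or.inr (by have : (a : ℝ) + b + k = 2 * (j : ℝ) + 1 := by exact_mod_cast hj
                           simp only []; rw [this]; ring)⟩
  · rcases Int.even_or_odd (a - b) with ⟨j, hj⟩ | ⟨j, hj⟩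
    · exact ⟨j, Or.inl (by have : (a : ℝ) - b = (j : ℝ) + j := by exact_mod_cast hj
                           simp only []; rw [this]; ring)⟩
    · exact ⟨j, Or.inr (by have : (a : ℝ) - b = 2 * (j : ℝ) + 1 := by exact_mod_cast hj
                           simp only []; rw [this]; ring)⟩
  · apply Set.ext
    intro p
    simp only [Finset.coe_sort_coe, Finset.mem_coe, Set.mem_setOf_eq]
    constructor
    · intro hp
      have h1 : a ≤ u p := hmin p hp
      have h2 : u p ≤ a + k := hAa ▸ hmax p hp
      have h3 : b ≤ v p := hminb p hp
      have h4 : v p ≤ b + k := hBb ▸ hmaxb p hp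
      apply rkey
      · have e : ((a : ℝ) + b + k) / 2 - p.1 + (((a : ℝ) - b) / 2 - p.2)
            = (a : ℝ) + (k : ℝ) / 2 - (u p : ℤ) := by
          simp [hu]; ring
        rw [e, abs_le]
        have c1 : (a : ℝ) ≤ ((u p : ℤ) : ℝ) := by exact_mod_cast h1
        have c2 : ((u p : ℤ) : ℝ) ≤ (a : ℝ) + k := by exact_mod_cast h2
        constructor <;> linarith
      · have e : ((a : ℝ) + b + k) / 2 - p.1 - (((a : ℝ) - b) / 2 - p.2)
            = (b : ℝ) + (k : ℝ) / 2 - (v p : ℤ) := by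
          simp [hv]; ring
        rw [e, abs_le]
        have c1 : (b : ℝ) ≤ ((v p : ℤ) : ℝ) := by exact_mod_cast h3
        have c2 : ((v p : ℤ) : ℝ) ≤ (b : ℝ) + k := by exact_mod_cast h4
        constructor <;> linarith
    · intro hp
      have hsum : |(((a : ℝ) + b + k) / 2 - p.1) + (((a : ℝ) - b) / 2 - p.2)| ≤ (k : ℝ) / 2 :=
        (abs_add_le _ _).trans hp
      have hdiff : |(((a : ℝ) + b + k) / 2 - p.1) - (((a : ℝ) - b) / 2 - p.2)| ≤ (k : ℝ) / 2 :=
        (myabs_sub _ _).trans hp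
      have e1 : ((a : ℝ) + b + k) / 2 - p.1 + (((a : ℝ) - b) / 2 - p.2)
          = (a : ℝ) + (k : ℝ) / 2 - (u p : ℤ) := by
        simp [hu]; ring
      have e2 : ((a : ℝ) + b + k) / 2 - p.1 - (((a : ℝ) - b) / 2 - p.2)
          = (b : ℝ) + (k : ℝ) / 2 - (v p : ℤ) := by
        simp [hv]; ring
      rw [e1, abs_le] at hsum
      rw [e2, abs_le] at hdiff
      have h1 : a ≤ u p := by
        have : (a : ℝ) ≤ ((u p : ℤ) : ℝ) := by linarith [hsum.2]
        exact_mod_cast this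
      have h2 : u p ≤ a + k := by
        have : ((u p : ℤ) : ℝ) ≤ (a : ℝ) + k := by linarith [hsum.1]
        exact_mod_cast this
      have h3 : b ≤ v p := by
        have : (b : ℝ) ≤ ((v p : ℤ) : ℝ) := by linarith [hdiff.2]
        exact_mod_cast this
      have h4 : v p ≤ b + k := by
        have : ((v p : ℤ) : ℝ) ≤ (b : ℝ) + k := by linarith [hdiff.1]
        exact_mod_cast this
      apply facet_insert hk hσ
      intro x hx
      refine (hd p x).mpr ⟨?_, ?_⟩
      · have h5 := hmin x hx
        have h6 : u x ≤ a + k := hAa ▸ hmax x hx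
        rw [abs_le]; omega
      · have h5 := hminb x hx
        have h6 : v x ≤ b + k := hBb ▸ hmaxb x hx
        rw [abs_le]; omega
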